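/- Let κ = (ξ,η) be a quaternionic spinor. Then the set {(α,β) ∈ ℍ² : α η̄ + ξ β̄ is a paravector} equals {κx + κ̌v : x ∈ ℍ, v ∈ $ℝ³}; every element of this set has a unique representation κx + κ̌v with x ∈ ℍ and v ∈ $ℝ³; and the real subspaces κℍ = {κx : x ∈ ℍ} and κ̌$ℝ³ = {κ̌v : v ∈ $ℝ³} are orthogonal with respect to ⟨·,·⟩. -/

import Mathlib

open Quaternion

noncomputable section

/-- The involution `q* = a + bi + cj - dk` on quaternions (Clifford reversion). -/
def qstar (q : ℍ[ℝ]) : ℍ[ℝ] := ⟨q.re, q.imI, q.imJ, -q.imK⟩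

/-- The involution `q' = a - bi - cj + dk` on quaternions. -/
def qprime (q : ℍ[ℝ]) : ℍ[ℝ] := ⟨q.re, -q.imI, -q.imJ, q.imK⟩

/-- A paravector is an element of `ℝ + ℝi + ℝj`, i.e. a quaternion with zero `k`-component. -/
def IsParavector (q : ℍ[ℝ]) : Prop := q.imK = 0

/-- The quaternion `k`. -/
def qk : ℍ[ℝ] := ⟨0, 0, 0, 1⟩

/-- A quaternionic spinor: a pair `(ξ, η) ≠ (0,0)` with `ξ * conj η` a paravector. -/
def IsSpinor (κ : ℍ[ℝ] × ℍ[ℝ]) : Prop := κ ≠ 0 ∧ IsParavector (κ.1 * star κ.2)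

/-- The bracket `{κ₁, κ₂} = ξ₁* η₂ − η₁* ξ₂`. -/
def bracket (κ₁ κ₂ : ℍ[ℝ] × ℍ[ℝ]) : ℍ[ℝ] := qstar κ₁.1 * κ₂.2 - qstar κ₁.2 * κ₂.1

/-- Right multiplication `κ x = (ξ x, η x)`. -/
def rmul (κ : ℍ[ℝ] × ℍ[ℝ]) (x : ℍ[ℝ]) : ℍ[ℝ] × ℍ[ℝ] := (κ.1 * x, κ.2 * x)

/-- The complementary pair `κ̌ = (η', −ξ')`. -/
def qcheck (κ : ℍ[ℝ] × ℍ[ℝ]) : ℍ[ℝ] × ℍ[ℝ] := (qprime κ.2, -qprime κ.1)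

/-- The real inner product on `ℍ²`: `⟨κ₁, κ₂⟩ = Re (ξ₁ ξ̄₂ + η₁ η̄₂)`. -/
def qinner (κ₁ κ₂ : ℍ[ℝ] × ℍ[ℝ]) : ℝ := (κ₁.1 * star κ₂.1 + κ₁.2 * star κ₂.2).re

/-- The squared norm `|κ|² = |ξ|² + |η|²` on `ℍ²`. -/
def qnsq (κ : ℍ[ℝ] × ℍ[ℝ]) : ℝ := Quaternion.normSq κ.1 + Quaternion.normSq κ.2

private lemma quat_ext' {a b : ℍ[ℝ]} (h1 : a.re = b.re) (h2 : a.imI = b.imI)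
    (h3 : a.imJ = b.imJ) (h4 : a.imK = b.imK) : a = b := by
  exact QuaternionAlgebra.ext h1 h2 h3 h4

@[simp] private lemma qprime_re (q : ℍ[ℝ]) : (qprime q).re = q.re := rfl
@[simp] private lemma qprime_imI (q : ℍ[ℝ]) : (qprime q).imI = -q.imI := rfl
@[simp] private lemma qprime_imJ (q : ℍ[ℝ]) : (qprime q).imJ = -q.imJ := rfl
@[simp] private lemma qprime_imK (q : ℍ[ℝ]) : (qprime q).imK = q.imK := rfl
@[simp] private lemma qstar_re (q : ℍ[ℝ]) : (qstar q).re = q.re := rfl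
@[simp] private lemma qstar_imI (q : ℍ[ℝ]) : (qstar q).imI = q.imI := rfl
@[simp] private lemma qstar_imJ (q : ℍ[ℝ]) : (qstar q).imJ = q.imJ := rfl
@[simp] private lemma qstar_imK (q : ℍ[ℝ]) : (qstar q).imK = -q.imK := rfl

private lemma key1 (ξ η x w : ℍ[ℝ]) (hp : (ξ * star η).imK = 0) :
    star ξ * (ξ * x + qprime η * w) + star η * (η * x - qprime ξ * w)
      = (Quaternion.normSq ξ + Quaternion.normSq η) • x := by
  simp at hp
  refine quat_ext' ?_ ?_ ?_ ?_
  · simp [Quaternion.normSq_def']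
    linear_combination (2*w.imK) * hp
  · simp [Quaternion.normSq_def']
    linear_combination (2*w.imJ) * hp
  · simp [Quaternion.normSq_def']
    linear_combination (-2*w.imI) * hp
  · simp [Quaternion.normSq_def']
    linear_combination (-2*w.re) * hp

private lemma key2 (ξ η x w : ℍ[ℝ]) (hp : (ξ * star η).imK = 0) :
    qstar η * (ξ * x + qprime η * w) - qstar ξ * (η * x - qprime ξ * w)
      = (Quaternion.normSq ξ + Quaternion.normSq η) • w := by
  simp at hp
  refine quat_ext' ?_ ?_ ?_ ?_
  · simp [Quaternion.normSq_def']
    linear_combination (-2*x.imK) * hp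
  · simp [Quaternion.normSq_def']
    linear_combination (-2*x.imJ) * hp
  · simp [Quaternion.normSq_def']
    linear_combination (2*x.imI) * hp
  · simp [Quaternion.normSq_def']
    linear_combination (2*x.re) * hp

private lemma keyE1 (ξ η α β : ℍ[ℝ]) (hp : (ξ * star η).imK = 0) :
    ξ * (star ξ * α + star η * β) + qprime η * (qstar η * α - qstar ξ * β)
      = (Quaternion.normSq ξ + Quaternion.normSq η) • α := by
  simp at hp
  refine quat_ext' ?_ ?_ ?_ ?_
  · simp [Quaternion.normSq_def']
    linear_combination (-2*β.imK) * hp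
  · simp [Quaternion.normSq_def']
    linear_combination (-2*β.imJ) * hp
  · simp [Quaternion.normSq_def']
    linear_combination (2*β.imI) * hp
  · simp [Quaternion.normSq_def']
    linear_combination (2*β.re) * hp

private lemma keyE2 (ξ η α β : ℍ[ℝ]) (hp : (ξ * star η).imK = 0) :
    η * (star ξ * α + star η * β) - qprime ξ * (qstar η * α - qstar ξ * β)
      = (Quaternion.normSq ξ + Quaternion.normSq η) • β := by
  simp at hp
  refine quat_ext' ?_ ?_ ?_ ?_
  · simp [Quaternion.normSq_def']
    linear_combination (2*α.imK) * hp
  · simp [Quaternion.normSq_def']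
    linear_combination (2*α.imJ) * hp
  · simp [Quaternion.normSq_def']
    linear_combination (-2*α.imI) * hp
  · simp [Quaternion.normSq_def']
    linear_combination (-2*α.re) * hp

private lemma imK_id (ξ η α β : ℍ[ℝ]) :
    (α * star η + ξ * star β).imK = (qstar η * α - qstar ξ * β).imK := by
  simp; ring

private lemma ort (κ : ℍ[ℝ] × ℍ[ℝ]) (hp : (κ.1 * star κ.2).imK = 0) (x v : ℍ[ℝ]) :
    qinner (rmul κ x) (rmul (qcheck κ) v) = 0 := by
  simp only [qinner, rmul, qcheck] at *
  simp at *
  linear_combination (2*x.re*v.imK + 2*x.imI*v.imJ - 2*x.imJ*v.imI - 2*x.imK*v.re) * hp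

/-- The tangent space to `Sℍ` at a spinor `κ = (ξ,η)`:
the set `{(α,β) : α η̄ + ξ β̄ is a paravector}` equals `κℍ ⊕ κ̌$ℝ³`, the representation
`κx + κ̌v` (with `v` a paravector) is unique, and the two summands are orthogonal. -/
theorem tangent_space_spinors (κ : ℍ[ℝ] × ℍ[ℝ]) (hκ : IsSpinor κ) :
    ({ν : ℍ[ℝ] × ℍ[ℝ] | IsParavector (ν.1 * star κ.2 + κ.1 * star ν.2)} =
      {ν : ℍ[ℝ] × ℍ[ℝ] | ∃ x v : ℍ[ℝ], IsParavector v ∧ ν = rmul κ x + rmul (qcheck κ) v}) ∧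
    (∀ x₁ v₁ x₂ v₂ : ℍ[ℝ], IsParavector v₁ → IsParavector v₂ →
      rmul κ x₁ + rmul (qcheck κ) v₁ = rmul κ x₂ + rmul (qcheck κ) v₂ → x₁ = x₂ ∧ v₁ = v₂) ∧
    (∀ x v : ℍ[ℝ], IsParavector v → qinner (rmul κ x) (rmul (qcheck κ) v) = 0) := by
  obtain ⟨hne, hpv⟩ := hκ
  have hpv' : (κ.1 * star κ.2).imK = 0 := hpv
  set N : ℝ := Quaternion.normSq κ.1 + Quaternion.normSq κ.2 with hNdef
  have hN : N ≠ 0 := by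
    intro hc
    apply hne
    have hn1 : Quaternion.normSq κ.1 = 0 := by
      nlinarith [Quaternion.normSq_nonneg (a := κ.1), Quaternion.normSq_nonneg (a := κ.2)]
    have hn2 : Quaternion.normSq κ.2 = 0 := by
      nlinarith [Quaternion.normSq_nonneg (a := κ.1), Quaternion.normSq_nonneg (a := κ.2)]
    exact Prod.ext (Quaternion.normSq_eq_zero.mp hn1) (Quaternion.normSq_eq_zero.mp hn2)
  have hc1 : ∀ x v : ℍ[ℝ], (rmul κ x + rmul (qcheck κ) v).1 = κ.1 * x + qprime κ.2 * v := by
    intro x v; simp [rmul, qcheck]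
  have hc2 : ∀ x v : ℍ[ℝ], (rmul κ x + rmul (qcheck κ) v).2 = κ.2 * x - qprime κ.1 * v := by
    intro x v; simp [rmul, qcheck, sub_eq_add_neg]
  refine ⟨?_, ?_, ?_⟩
  · ext ν
    simp only [Set.mem_setOf_eq]
    constructor
    · intro hν
      have hν' : (ν.1 * star κ.2 + κ.1 * star ν.2).imK = 0 := hν
      refine ⟨N⁻¹ • (star κ.1 * ν.1 + star κ.2 * ν.2),
        N⁻¹ • (qstar κ.2 * ν.1 - qstar κ.1 * ν.2), ?_, ?_⟩
      · show (N⁻¹ • (qstar κ.2 * ν.1 - qstar κ.1 * ν.2)).imK = 0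
        have hW : (qstar κ.2 * ν.1 - qstar κ.1 * ν.2).imK = 0 := by
          rw [← imK_id κ.1 κ.2 ν.1 ν.2]; exact hν'
        simp [hW]
      · refine Prod.ext ?_ ?_
        · rw [hc1]
          rw [mul_smul_comm, mul_smul_comm, ← smul_add, keyE1 κ.1 κ.2 ν.1 ν.2 hpv',
            ← hNdef, smul_smul, inv_mul_cancel₀ hN, one_smul]
        · rw [hc2]
          rw [mul_smul_comm, mul_smul_comm, ← smul_sub, keyE2 κ.1 κ.2 ν.1 ν.2 hpv',
            ← hNdef, smul_smul, inv_mul_cancel₀ hN, one_smul]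
    · rintro ⟨x, v, hv, rfl⟩
      show ((rmul κ x + rmul (qcheck κ) v).1 * star κ.2
        + κ.1 * star (rmul κ x + rmul (qcheck κ) v).2).imK = 0
      rw [hc1, hc2, imK_id κ.1 κ.2 _ _, key2 κ.1 κ.2 x v hpv']
      have hv' : v.imK = 0 := hv
      simp [hv']
  · intro x₁ v₁ x₂ v₂ hv₁ hv₂ heq
    have e1 : κ.1 * x₁ + qprime κ.2 * v₁ = κ.1 * x₂ + qprime κ.2 * v₂ := by
      rw [← hc1 x₁ v₁, ← hc1 x₂ v₂, heq]
    have e2 : κ.2 * x₁ - qprime κ.1 * v₁ = κ.2 * x₂ - qprime κ.1 * v₂ := by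
      rw [← hc2 x₁ v₁, ← hc2 x₂ v₂, heq]
    constructor
    · refine smul_right_injective ℍ[ℝ] hN ?_
      show N • x₁ = N • x₂
      rw [hNdef, ← key1 κ.1 κ.2 x₁ v₁ hpv', ← key1 κ.1 κ.2 x₂ v₂ hpv', e1, e2]
    · refine smul_right_injective ℍ[ℝ] hN ?_
      show N • v₁ = N • v₂
      rw [hNdef, ← key2 κ.1 κ.2 x₁ v₁ hpv', ← key2 κ.1 κ.2 x₂ v₂ hpv', e1, e2]
  · intro x v _
    exact ort κ hpv' x v
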